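/- arXiv:2211.03999 — 3 statements merged into one kernel-verified Lean document; each statement's English description precedes it below -/
import Mathlib

section
/- (Second moments of Haar random 2-qubit gates.) Let μ be the Haar probability measure on the compact group U(4) = Matrix.unitaryGroup (Fin 4) ℂ, and let p, q be normalized 2-qubit Paulis. Then ∫ Tr(p·U·q·U†)² dμ(U) equals: 1 if p = q = (I⊗I)/2; 0 if exactly one of p, q equals (I⊗I)/2; and 1/15 if both p and q differ from (I⊗I)/2. -/
open Matrix MeasureTheory

/-- Labels for the four single-qubit Pauli matrices. -/
inductive PauliLabel : Type
  | I | X | Y | Z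
  deriving DecidableEq

instance instFintypePauliLabel : Fintype PauliLabel where
  elems := {PauliLabel.I, PauliLabel.X, PauliLabel.Y, PauliLabel.Z}
  complete := by intro x; cases x <;> simp

/-- The single-qubit Pauli matrices over `ℂ`. -/
noncomputable def pauliMat : PauliLabel → Matrix (Fin 2) (Fin 2) ℂ
  | PauliLabel.I => !![1, 0; 0, 1]
  | PauliLabel.X => !![0, 1; 1, 0]
  | PauliLabel.Y => !![0, -Complex.I; Complex.I, 0]
  | PauliLabel.Z => !![1, 0; 0, -1]

/-- The Kronecker product of two `2×2` complex matrices, written out as a `4×4` matrix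
(rows/columns ordered as `00, 01, 10, 11`). -/
noncomputable def kron2 (A B : Matrix (Fin 2) (Fin 2) ℂ) : Matrix (Fin 4) (Fin 4) ℂ :=
  !![A 0 0 * B 0 0, A 0 0 * B 0 1, A 0 1 * B 0 0, A 0 1 * B 0 1;
     A 0 0 * B 1 0, A 0 0 * B 1 1, A 0 1 * B 1 0, A 0 1 * B 1 1;
     A 1 0 * B 0 0, A 1 0 * B 0 1, A 1 1 * B 0 0, A 1 1 * B 0 1;
     A 1 0 * B 1 0, A 1 0 * B 1 1, A 1 1 * B 1 0, A 1 1 * B 1 1]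

/-- The 2-qubit Pauli string `σ_a ⊗ σ_b`, as a `4×4` complex matrix. -/
noncomputable def pauli2 (a b : PauliLabel) : Matrix (Fin 4) (Fin 4) ℂ :=
  kron2 (pauliMat a) (pauliMat b)

lemma kron2_mul (A B C D : Matrix (Fin 2) (Fin 2) ℂ) :
    kron2 A B * kron2 C D = kron2 (A * C) (B * D) := by
  ext i j
  fin_cases i <;> fin_cases j <;>
    simp [kron2, Matrix.mul_apply, Fin.sum_univ_four, Fin.sum_univ_two] <;> ring

lemma kron2_star (A B : Matrix (Fin 2) (Fin 2) ℂ) :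
    star (kron2 A B) = kron2 (star A) (star B) := by
  ext i j
  fin_cases i <;> fin_cases j <;>
    simp [kron2, Matrix.star_eq_conjTranspose, Matrix.conjTranspose_apply]

lemma kron2_one : kron2 1 1 = 1 := by
  ext i j
  fin_cases i <;> fin_cases j <;>
    simp [kron2, Matrix.one_apply, Matrix.vecHead, Matrix.vecTail]

lemma pauliMat_mul_star (a : PauliLabel) : pauliMat a * star (pauliMat a) = 1 := by
  cases a <;>
    · ext i j
      fin_cases i <;> fin_cases j <;>
        simp [pauliMat, Matrix.mul_apply, Fin.sum_univ_two, Matrix.one_apply,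
          Matrix.star_eq_conjTranspose, Matrix.conjTranspose_apply]

/-- Every 2-qubit Pauli string is a unitary `4×4` matrix. -/
lemma pauli2_mem_unitaryGroup (a b : PauliLabel) :
    pauli2 a b ∈ Matrix.unitaryGroup (Fin 4) ℂ := by
  rw [Matrix.mem_unitaryGroup_iff, pauli2, kron2_star, kron2_mul,
    pauliMat_mul_star, pauliMat_mul_star, kron2_one]

/-- The 2-qubit Pauli string `σ_a ⊗ σ_b` as an element of the unitary group `U(4)`. -/
noncomputable def pauli2U (a b : PauliLabel) : Matrix.unitaryGroup (Fin 4) ℂ :=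
  ⟨pauli2 a b, pauli2_mem_unitaryGroup a b⟩

/-- The normalized 2-qubit Pauli `(σ_a ⊗ σ_b) / 2`. -/
noncomputable def npauli2 (p : PauliLabel × PauliLabel) : Matrix (Fin 4) (Fin 4) ℂ :=
  (2 : ℂ)⁻¹ • pauli2 p.1 p.2

/-- The identity label pair, corresponding to the normalized Pauli `(I ⊗ I)/2`. -/
def idLabel : PauliLabel × PauliLabel := (PauliLabel.I, PauliLabel.I)

section AuxA

lemma pauliMat_star (a : PauliLabel) : star (pauliMat a) = pauliMat a := by
  cases a <;>
    · ext i j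
      fin_cases i <;> fin_cases j <;>
        simp [pauliMat, Matrix.star_eq_conjTranspose, Matrix.conjTranspose_apply]

lemma pauliMat_I : pauliMat PauliLabel.I = 1 := by
  ext i j
  fin_cases i <;> fin_cases j <;> simp [pauliMat, Matrix.one_apply]

lemma pauli2_mul_self (a b : PauliLabel) : pauli2 a b * pauli2 a b = 1 := by
  conv_lhs => rw [show pauli2 a b * pauli2 a b = pauli2 a b * star (pauli2 a b) by
    rw [pauli2, kron2_star, pauliMat_star, pauliMat_star]]
  rw [pauli2, kron2_star, kron2_mul, pauliMat_mul_star, pauliMat_mul_star, kron2_one]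

lemma pauli2_II : pauli2 PauliLabel.I PauliLabel.I = 1 := by
  rw [pauli2, pauliMat_I, kron2_one]

lemma trace_pauli2 (a b : PauliLabel) (h : (a, b) ≠ idLabel) :
    (pauli2 a b).trace = 0 := by
  cases a <;> cases b <;>
    first
      | exact absurd rfl h
      | simp [pauli2, kron2, pauliMat, Matrix.trace, Matrix.diag, Fin.sum_univ_four, Matrix.vecHead, Matrix.vecTail]

end AuxA
section AuxB

noncomputable def Sg : Matrix (Fin 2) (Fin 2) ℂ := !![1, 0; 0, Complex.I]

noncomputable def Vg : Matrix (Fin 2) (Fin 2) ℂ :=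
  !![(1 + Complex.I)/2, (1 - Complex.I)/2; (1 - Complex.I)/2, (1 + Complex.I)/2]

lemma Sg_mul_star : Sg * star Sg = 1 := by
  ext i j
  fin_cases i <;> fin_cases j <;>
    · simp [Sg, Matrix.mul_apply, Fin.sum_univ_two, Matrix.star_eq_conjTranspose,
        Matrix.conjTranspose_apply, Matrix.one_apply, Complex.star_def, map_div₀, map_add,
        map_sub, _root_.map_one, map_ofNat, Complex.conj_I, Matrix.vecHead, Matrix.vecTail]
      try ring_nf
      try simp [Complex.I_sq]
      try ring_nf

lemma Vg_mul_star : Vg * star Vg = 1 := by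
  ext i j
  fin_cases i <;> fin_cases j <;>
    · simp [Vg, Matrix.mul_apply, Fin.sum_univ_two, Matrix.star_eq_conjTranspose,
        Matrix.conjTranspose_apply, Matrix.one_apply, Complex.star_def, map_div₀, map_add,
        map_sub, _root_.map_one, map_ofNat, Complex.conj_I, Matrix.vecHead, Matrix.vecTail]
      try ring_nf
      try simp [Complex.I_sq]
      try ring_nf

lemma Sg_conj_X : Sg * pauliMat PauliLabel.X * star Sg = pauliMat PauliLabel.Y := by
  ext i j
  fin_cases i <;> fin_cases j <;>
    · simp [Sg, pauliMat, Matrix.mul_apply, Fin.sum_univ_two, Matrix.star_eq_conjTranspose,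
        Matrix.conjTranspose_apply, Complex.star_def, map_div₀, map_add,
        map_sub, _root_.map_one, map_ofNat, Complex.conj_I, Matrix.vecHead, Matrix.vecTail]
      try ring_nf
      try simp [Complex.I_sq]
      try ring_nf

lemma Vg_conj_Y : Vg * pauliMat PauliLabel.Y * star Vg = pauliMat PauliLabel.Z := by
  ext i j
  fin_cases i <;> fin_cases j <;>
    · simp [Vg, pauliMat, Matrix.mul_apply, Fin.sum_univ_two, Matrix.star_eq_conjTranspose,
        Matrix.conjTranspose_apply, Complex.star_def, map_div₀, map_add,
        map_sub, _root_.map_one, map_ofNat, Complex.conj_I, Matrix.vecHead, Matrix.vecTail]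
      try ring_nf
      try simp [Complex.I_sq]
      try ring_nf

lemma star_kron2 (A B : Matrix (Fin 2) (Fin 2) ℂ) :
    (kron2 A B)ᴴ = kron2 (star A) (star B) := by
  rw [← Matrix.star_eq_conjTranspose, kron2_star]

lemma kron_mem_left {W : Matrix (Fin 2) (Fin 2) ℂ} (hW : W * star W = 1) :
    kron2 W 1 ∈ Matrix.unitaryGroup (Fin 4) ℂ := by
  rw [Matrix.mem_unitaryGroup_iff, kron2_star, kron2_mul, hW, star_one, one_mul, kron2_one]

lemma kron_mem_right {W : Matrix (Fin 2) (Fin 2) ℂ} (hW : W * star W = 1) :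
    kron2 1 W ∈ Matrix.unitaryGroup (Fin 4) ℂ := by
  rw [Matrix.mem_unitaryGroup_iff, kron2_star, kron2_mul, hW, star_one, one_mul, kron2_one]

/-- conjugation by a left local gate -/
lemma conj_kron_left (W A B : Matrix (Fin 2) (Fin 2) ℂ) :
    kron2 W 1 * kron2 A B * (kron2 W 1)ᴴ = kron2 (W * A * star W) B := by
  rw [star_kron2, kron2_mul, kron2_mul, star_one, one_mul, mul_one]

lemma conj_kron_right (W A B : Matrix (Fin 2) (Fin 2) ℂ) :
    kron2 1 W * kron2 A B * (kron2 1 W)ᴴ = kron2 A (W * B * star W) := by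
  rw [star_kron2, kron2_mul, kron2_mul, star_one, one_mul, mul_one]

noncomputable def SWAPm : Matrix (Fin 4) (Fin 4) ℂ :=
  !![1,0,0,0; 0,0,1,0; 0,1,0,0; 0,0,0,1]

noncomputable def CNOTm : Matrix (Fin 4) (Fin 4) ℂ :=
  !![1,0,0,0; 0,1,0,0; 0,0,0,1; 0,0,1,0]

lemma SWAPm_star : SWAPm ᴴ = SWAPm := by
  ext i j
  fin_cases i <;> fin_cases j <;>
    simp [SWAPm, Matrix.conjTranspose_apply, Matrix.vecHead, Matrix.vecTail]

lemma CNOTm_star : CNOTm ᴴ = CNOTm := by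
  ext i j
  fin_cases i <;> fin_cases j <;>
    simp [CNOTm, Matrix.conjTranspose_apply, Matrix.vecHead, Matrix.vecTail]

lemma SWAPm_mem : SWAPm ∈ Matrix.unitaryGroup (Fin 4) ℂ := by
  rw [Matrix.mem_unitaryGroup_iff, Matrix.star_eq_conjTranspose, SWAPm_star]
  ext i j
  fin_cases i <;> fin_cases j <;>
    simp [SWAPm, Matrix.mul_apply, Fin.sum_univ_four, Matrix.one_apply,
      Matrix.vecHead, Matrix.vecTail]

lemma CNOTm_mem : CNOTm ∈ Matrix.unitaryGroup (Fin 4) ℂ := by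
  rw [Matrix.mem_unitaryGroup_iff, Matrix.star_eq_conjTranspose, CNOTm_star]
  ext i j
  fin_cases i <;> fin_cases j <;>
    simp [CNOTm, Matrix.mul_apply, Fin.sum_univ_four, Matrix.one_apply,
      Matrix.vecHead, Matrix.vecTail]

lemma swap_conj (A B : Matrix (Fin 2) (Fin 2) ℂ) :
    SWAPm * kron2 A B * SWAPm ᴴ = kron2 B A := by
  rw [SWAPm_star]
  ext i j
  fin_cases i <;> fin_cases j <;>
    · simp [SWAPm, kron2, Matrix.mul_apply, Fin.sum_univ_four,
        Matrix.vecHead, Matrix.vecTail]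
      try ring

lemma cnot_conj : CNOTm * pauli2 PauliLabel.X PauliLabel.I * CNOTm ᴴ =
    pauli2 PauliLabel.X PauliLabel.X := by
  rw [CNOTm_star]
  ext i j
  fin_cases i <;> fin_cases j <;>
    · simp [CNOTm, pauli2, kron2, pauliMat, Matrix.mul_apply, Fin.sum_univ_four,
        Matrix.vecHead, Matrix.vecTail]

end AuxB
section AuxC

instance unitaryGroup_compactSpace : CompactSpace (Matrix.unitaryGroup (Fin 4) ℂ) := by
  have main : IsCompact (Matrix.unitaryGroup (Fin 4) ℂ : Set (Matrix (Fin 4) (Fin 4) ℂ)) := ?_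
  · exact isCompact_iff_compactSpace.mp main
  have hsub : (Matrix.unitaryGroup (Fin 4) ℂ : Set (Matrix (Fin 4) (Fin 4) ℂ)) ⊆
      Set.univ.pi fun _ : Fin 4 => Set.univ.pi fun _ : Fin 4 => Metric.closedBall (0 : ℂ) 1 := by
    intro U hU
    have h1 : star U * U = 1 := (Unitary.mem_iff.mp hU).1
    intro i _ j _
    have h2 : (star U * U) j j = (1 : Matrix (Fin 4) (Fin 4) ℂ) j j := by rw [h1]
    have h3 : ∑ k, (Complex.normSq (U k j) : ℂ) = 1 := by
      simpa [Matrix.mul_apply, Matrix.star_apply, Matrix.one_apply, Complex.star_def,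
        Complex.normSq_eq_conj_mul_self] using h2
    have h4 : ∑ k, Complex.normSq (U k j) = 1 := by exact_mod_cast h3
    have h5 : Complex.normSq (U i j) ≤ 1 :=
      h4 ▸ Finset.single_le_sum (f := fun k => Complex.normSq (U k j))
        (fun k _ => Complex.normSq_nonneg _) (Finset.mem_univ i)
    have h6 : Real.sqrt (Complex.normSq (U i j)) ≤ 1 := by
      rw [← Real.sqrt_one]
      exact Real.sqrt_le_sqrt h5
    simpa [Metric.mem_closedBall, dist_zero_right,
      Complex.norm_def] using h6
  have hclosed : IsClosed (Matrix.unitaryGroup (Fin 4) ℂ : Set (Matrix (Fin 4) (Fin 4) ℂ)) := by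
    have hset : (Matrix.unitaryGroup (Fin 4) ℂ : Set (Matrix (Fin 4) (Fin 4) ℂ)) =
        {U | star U * U = 1} ∩ {U | U * star U = 1} := by
      ext U
      exact Unitary.mem_iff
    rw [hset]
    exact (isClosed_eq (continuous_star.matrix_mul continuous_id) continuous_const).inter
      (isClosed_eq (continuous_id.matrix_mul continuous_star) continuous_const)
  exact IsCompact.of_isClosed_subset
    (isCompact_univ_pi fun _ => isCompact_univ_pi fun _ => isCompact_closedBall _ _)
    hclosed hsub

lemma integrable_trace_sq [MeasurableSpace (Matrix.unitaryGroup (Fin 4) ℂ)]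
    [BorelSpace (Matrix.unitaryGroup (Fin 4) ℂ)]
    (μ : Measure (Matrix.unitaryGroup (Fin 4) ℂ)) [IsProbabilityMeasure μ]
    (P Q : Matrix (Fin 4) (Fin 4) ℂ) :
    Integrable (fun U : Matrix.unitaryGroup (Fin 4) ℂ =>
      (P * (U : Matrix (Fin 4) (Fin 4) ℂ) * Q * (U : Matrix (Fin 4) (Fin 4) ℂ)ᴴ).trace ^ 2) μ := by
  have hc : Continuous fun U : Matrix.unitaryGroup (Fin 4) ℂ =>
      (U : Matrix (Fin 4) (Fin 4) ℂ) := continuous_subtype_val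
  have hcont : Continuous fun U : Matrix.unitaryGroup (Fin 4) ℂ =>
      (P * (U : Matrix (Fin 4) (Fin 4) ℂ) * Q * (U : Matrix (Fin 4) (Fin 4) ℂ)ᴴ).trace ^ 2 :=
    ((((continuous_const.matrix_mul hc).matrix_mul continuous_const).matrix_mul
      hc.matrix_conjTranspose).matrix_trace).pow 2
  exact hcont.integrable_of_hasCompactSupport (HasCompactSupport.of_compactSpace _)

lemma integral_conj_step [MeasurableSpace (Matrix.unitaryGroup (Fin 4) ℂ)]
    [BorelSpace (Matrix.unitaryGroup (Fin 4) ℂ)]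
    (μ : Measure (Matrix.unitaryGroup (Fin 4) ℂ)) [μ.IsHaarMeasure]
    (V : Matrix.unitaryGroup (Fin 4) ℂ) (p p' q : PauliLabel × PauliLabel)
    (h : (V : Matrix (Fin 4) (Fin 4) ℂ) * pauli2 p'.1 p'.2 * (V : Matrix (Fin 4) (Fin 4) ℂ)ᴴ =
      pauli2 p.1 p.2) :
    ∫ U : Matrix.unitaryGroup (Fin 4) ℂ,
        (npauli2 p * (U : Matrix (Fin 4) (Fin 4) ℂ) * npauli2 q *
          (U : Matrix (Fin 4) (Fin 4) ℂ)ᴴ).trace ^ 2 ∂μ =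
      ∫ U : Matrix.unitaryGroup (Fin 4) ℂ,
        (npauli2 p' * (U : Matrix (Fin 4) (Fin 4) ℂ) * npauli2 q *
          (U : Matrix (Fin 4) (Fin 4) ℂ)ᴴ).trace ^ 2 ∂μ := by
  have hVV : (V : Matrix (Fin 4) (Fin 4) ℂ)ᴴ * (V : Matrix (Fin 4) (Fin 4) ℂ) = 1 := by
    rw [← Matrix.star_eq_conjTranspose]
    exact Matrix.UnitaryGroup.star_mul_self V
  have hP : (V : Matrix (Fin 4) (Fin 4) ℂ)ᴴ * npauli2 p * (V : Matrix (Fin 4) (Fin 4) ℂ) =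
      npauli2 p' := by
    rw [npauli2, npauli2, Matrix.mul_smul, Matrix.smul_mul]
    congr 1
    rw [← h]
    simp only [← Matrix.mul_assoc]
    rw [hVV, Matrix.one_mul, Matrix.mul_assoc, hVV, Matrix.mul_one]
  have key : ∀ U : Matrix.unitaryGroup (Fin 4) ℂ,
      (npauli2 p * ((V * U : Matrix.unitaryGroup (Fin 4) ℂ) : Matrix (Fin 4) (Fin 4) ℂ) *
          npauli2 q * ((V * U : Matrix.unitaryGroup (Fin 4) ℂ) : Matrix (Fin 4) (Fin 4) ℂ)ᴴ).trace
        = (npauli2 p' * (U : Matrix (Fin 4) (Fin 4) ℂ) * npauli2 q *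
          (U : Matrix (Fin 4) (Fin 4) ℂ)ᴴ).trace := by
    intro U
    have hcoe : ((V * U : Matrix.unitaryGroup (Fin 4) ℂ) : Matrix (Fin 4) (Fin 4) ℂ) =
        (V : Matrix (Fin 4) (Fin 4) ℂ) * (U : Matrix (Fin 4) (Fin 4) ℂ) := rfl
    rw [hcoe, Matrix.conjTranspose_mul]
    simp only [← Matrix.mul_assoc]
    rw [Matrix.trace_mul_comm]
    simp only [← Matrix.mul_assoc]
    rw [hP]
  calc ∫ U : Matrix.unitaryGroup (Fin 4) ℂ,
        (npauli2 p * (U : Matrix (Fin 4) (Fin 4) ℂ) * npauli2 q *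
          (U : Matrix (Fin 4) (Fin 4) ℂ)ᴴ).trace ^ 2 ∂μ
      = ∫ U : Matrix.unitaryGroup (Fin 4) ℂ,
        (npauli2 p * ((V * U : Matrix.unitaryGroup (Fin 4) ℂ) : Matrix (Fin 4) (Fin 4) ℂ) *
          npauli2 q *
          ((V * U : Matrix.unitaryGroup (Fin 4) ℂ) : Matrix (Fin 4) (Fin 4) ℂ)ᴴ).trace ^ 2 ∂μ :=
        (integral_mul_left_eq_self (fun W : Matrix.unitaryGroup (Fin 4) ℂ =>
          (npauli2 p * (W : Matrix (Fin 4) (Fin 4) ℂ) * npauli2 q *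
            (W : Matrix (Fin 4) (Fin 4) ℂ)ᴴ).trace ^ 2) V).symm
    _ = ∫ U : Matrix.unitaryGroup (Fin 4) ℂ,
        (npauli2 p' * (U : Matrix (Fin 4) (Fin 4) ℂ) * npauli2 q *
          (U : Matrix (Fin 4) (Fin 4) ℂ)ᴴ).trace ^ 2 ∂μ := by
        apply integral_congr_ae
        filter_upwards with U
        rw [key U]

end AuxC
section AuxD

lemma sum_pauliLabel {M : Type*} [AddCommMonoid M] (f : PauliLabel → M) :
    ∑ a, f a = f PauliLabel.I + f PauliLabel.X + f PauliLabel.Y + f PauliLabel.Z := by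
  have huniv : (Finset.univ : Finset PauliLabel) =
      {PauliLabel.I, PauliLabel.X, PauliLabel.Y, PauliLabel.Z} := by decide
  rw [huniv, Finset.sum_insert (by decide), Finset.sum_insert (by decide),
    Finset.sum_insert (by decide), Finset.sum_singleton]
  abel

set_option maxRecDepth 100000 in
set_option maxHeartbeats 3200000 in
lemma trace_sq_sum (A : Matrix (Fin 4) (Fin 4) ℂ) :
    ∑ a : PauliLabel, ∑ b : PauliLabel, (npauli2 (a, b) * A).trace ^ 2 = (A * A).trace := by
  simp only [sum_pauliLabel (M := ℂ)]
  simp only [npauli2, pauli2, kron2, pauliMat, Matrix.trace, Matrix.diag, Matrix.mul_apply,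
    Fin.sum_univ_four, Matrix.smul_apply, smul_eq_mul]
  norm_num [Matrix.vecHead, Matrix.vecTail]
  ring_nf
  simp [Complex.I_sq]
  try ring_nf
  simp only [Complex.I_sq]
  ring
section AuxE

noncomputable def SLu : Matrix.unitaryGroup (Fin 4) ℂ := ⟨kron2 Sg 1, kron_mem_left Sg_mul_star⟩
noncomputable def SRu : Matrix.unitaryGroup (Fin 4) ℂ := ⟨kron2 1 Sg, kron_mem_right Sg_mul_star⟩
noncomputable def VLu : Matrix.unitaryGroup (Fin 4) ℂ := ⟨kron2 Vg 1, kron_mem_left Vg_mul_star⟩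
noncomputable def VRu : Matrix.unitaryGroup (Fin 4) ℂ := ⟨kron2 1 Vg, kron_mem_right Vg_mul_star⟩
noncomputable def SWu : Matrix.unitaryGroup (Fin 4) ℂ := ⟨SWAPm, SWAPm_mem⟩
noncomputable def CNu : Matrix.unitaryGroup (Fin 4) ℂ := ⟨CNOTm, CNOTm_mem⟩

lemma SL_conj (b : PauliLabel) :
    (SLu : Matrix (Fin 4) (Fin 4) ℂ) * pauli2 PauliLabel.X b *
      (SLu : Matrix (Fin 4) (Fin 4) ℂ)ᴴ = pauli2 PauliLabel.Y b := by
  show kron2 Sg 1 * kron2 (pauliMat PauliLabel.X) (pauliMat b) * (kron2 Sg 1)ᴴ = _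
  rw [conj_kron_left, Sg_conj_X]
  rfl

lemma SR_conj (a : PauliLabel) :
    (SRu : Matrix (Fin 4) (Fin 4) ℂ) * pauli2 a PauliLabel.X *
      (SRu : Matrix (Fin 4) (Fin 4) ℂ)ᴴ = pauli2 a PauliLabel.Y := by
  show kron2 1 Sg * kron2 (pauliMat a) (pauliMat PauliLabel.X) * (kron2 1 Sg)ᴴ = _
  rw [conj_kron_right, Sg_conj_X]
  rfl

lemma VL_conj (b : PauliLabel) :
    (VLu : Matrix (Fin 4) (Fin 4) ℂ) * pauli2 PauliLabel.Y b *
      (VLu : Matrix (Fin 4) (Fin 4) ℂ)ᴴ = pauli2 PauliLabel.Z b := by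
  show kron2 Vg 1 * kron2 (pauliMat PauliLabel.Y) (pauliMat b) * (kron2 Vg 1)ᴴ = _
  rw [conj_kron_left, Vg_conj_Y]
  rfl

lemma VR_conj (a : PauliLabel) :
    (VRu : Matrix (Fin 4) (Fin 4) ℂ) * pauli2 a PauliLabel.Y *
      (VRu : Matrix (Fin 4) (Fin 4) ℂ)ᴴ = pauli2 a PauliLabel.Z := by
  show kron2 1 Vg * kron2 (pauliMat a) (pauliMat PauliLabel.Y) * (kron2 1 Vg)ᴴ = _
  rw [conj_kron_right, Vg_conj_Y]
  rfl

lemma SW_conj (a b : PauliLabel) :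
    (SWu : Matrix (Fin 4) (Fin 4) ℂ) * pauli2 a b *
      (SWu : Matrix (Fin 4) (Fin 4) ℂ)ᴴ = pauli2 b a := by
  show SWAPm * kron2 (pauliMat a) (pauliMat b) * SWAPm ᴴ = _
  rw [swap_conj]
  rfl

lemma CN_conj :
    (CNu : Matrix (Fin 4) (Fin 4) ℂ) * pauli2 PauliLabel.X PauliLabel.I *
      (CNu : Matrix (Fin 4) (Fin 4) ℂ)ᴴ = pauli2 PauliLabel.X PauliLabel.X :=
  cnot_conj

/-- pointwise Parseval sum -/
lemma sum_g (q : PauliLabel × PauliLabel) (U : Matrix.unitaryGroup (Fin 4) ℂ) :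
    ∑ a : PauliLabel, ∑ b : PauliLabel,
      (npauli2 (a, b) * (U : Matrix (Fin 4) (Fin 4) ℂ) * npauli2 q *
        (U : Matrix (Fin 4) (Fin 4) ℂ)ᴴ).trace ^ 2 = 1 := by
  have hU1 : (U : Matrix (Fin 4) (Fin 4) ℂ)ᴴ * (U : Matrix (Fin 4) (Fin 4) ℂ) = 1 := by
    rw [← Matrix.star_eq_conjTranspose]; exact Matrix.UnitaryGroup.star_mul_self U
  set Um : Matrix (Fin 4) (Fin 4) ℂ := (U : Matrix (Fin 4) (Fin 4) ℂ) with hUm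
  set A : Matrix (Fin 4) (Fin 4) ℂ := Um * npauli2 q * Um ᴴ with hA
  have hshape : ∀ a b : PauliLabel,
      npauli2 (a, b) * Um * npauli2 q * Um ᴴ = npauli2 (a, b) * A := by
    intro a b
    rw [hA]
    simp only [Matrix.mul_assoc]
  have hAA : (A * A).trace = 1 := by
    have hA2 : A * A = Um * (npauli2 q * npauli2 q) * Um ᴴ := by
      rw [hA]
      rw [Matrix.mul_assoc (Um * npauli2 q) (Um ᴴ) (Um * npauli2 q * Um ᴴ)]
      rw [← Matrix.mul_assoc (Um ᴴ) (Um * npauli2 q) (Um ᴴ)]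
      rw [← Matrix.mul_assoc (Um ᴴ) Um (npauli2 q), hU1, Matrix.one_mul]
      simp only [Matrix.mul_assoc]
    have hQQ : npauli2 q * npauli2 q = (4 : ℂ)⁻¹ • (1 : Matrix (Fin 4) (Fin 4) ℂ) := by
      rw [npauli2, Matrix.smul_mul, Matrix.mul_smul, pauli2_mul_self, smul_smul]
      norm_num
    have hU2 : Um * Um ᴴ = 1 := by
      rw [← Matrix.star_eq_conjTranspose]
      exact Unitary.mul_star_self_of_mem U.2
    rw [hA2, hQQ, Matrix.mul_smul, Matrix.mul_one, Matrix.smul_mul, hU2, Matrix.trace_smul,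
      Matrix.trace_one]
    norm_num
  calc ∑ a : PauliLabel, ∑ b : PauliLabel, (npauli2 (a, b) * Um * npauli2 q * Um ᴴ).trace ^ 2
      = ∑ a : PauliLabel, ∑ b : PauliLabel, (npauli2 (a, b) * A).trace ^ 2 := by
        refine Finset.sum_congr rfl fun a _ => Finset.sum_congr rfl fun b _ => ?_
        rw [hshape a b]
    _ = (A * A).trace := trace_sq_sum A
    _ = 1 := hAA

end AuxE
section AuxF

lemma npauli2_id : npauli2 idLabel = (2 : ℂ)⁻¹ • (1 : Matrix (Fin 4) (Fin 4) ℂ) := by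
  rw [npauli2, show pauli2 idLabel.1 idLabel.2 = pauli2 PauliLabel.I PauliLabel.I from rfl,
    pauli2_II]

lemma point_id_id (U : Matrix.unitaryGroup (Fin 4) ℂ) :
    (npauli2 idLabel * (U : Matrix (Fin 4) (Fin 4) ℂ) * npauli2 idLabel *
      (U : Matrix (Fin 4) (Fin 4) ℂ)ᴴ).trace = 1 := by
  have hU2 : (U : Matrix (Fin 4) (Fin 4) ℂ) * (U : Matrix (Fin 4) (Fin 4) ℂ)ᴴ = 1 := by
    rw [← Matrix.star_eq_conjTranspose]
    exact Unitary.mul_star_self_of_mem U.2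
  rw [npauli2_id]
  simp only [Matrix.smul_mul, Matrix.mul_smul, Matrix.one_mul, Matrix.mul_one, smul_smul]
  rw [hU2, Matrix.trace_smul, Matrix.trace_one]
  norm_num

lemma point_id_q (q : PauliLabel × PauliLabel) (hq : q ≠ idLabel)
    (U : Matrix.unitaryGroup (Fin 4) ℂ) :
    (npauli2 idLabel * (U : Matrix (Fin 4) (Fin 4) ℂ) * npauli2 q *
      (U : Matrix (Fin 4) (Fin 4) ℂ)ᴴ).trace = 0 := by
  have hU1 : (U : Matrix (Fin 4) (Fin 4) ℂ)ᴴ * (U : Matrix (Fin 4) (Fin 4) ℂ) = 1 := by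
    rw [← Matrix.star_eq_conjTranspose]
    exact Unitary.star_mul_self_of_mem U.2
  have hq' : (q.1, q.2) ≠ idLabel := by rwa [Prod.mk.eta]
  rw [npauli2_id]
  simp only [Matrix.smul_mul, Matrix.one_mul, Matrix.trace_smul]
  rw [Matrix.trace_mul_comm, ← Matrix.mul_assoc, hU1, Matrix.one_mul,
    npauli2, Matrix.trace_smul, trace_pauli2 q.1 q.2 hq']
  simp

lemma point_p_id (p : PauliLabel × PauliLabel) (hp : p ≠ idLabel)
    (U : Matrix.unitaryGroup (Fin 4) ℂ) :
    (npauli2 p * (U : Matrix (Fin 4) (Fin 4) ℂ) * npauli2 idLabel *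
      (U : Matrix (Fin 4) (Fin 4) ℂ)ᴴ).trace = 0 := by
  have hU2 : (U : Matrix (Fin 4) (Fin 4) ℂ) * (U : Matrix (Fin 4) (Fin 4) ℂ)ᴴ = 1 := by
    rw [← Matrix.star_eq_conjTranspose]
    exact Unitary.mul_star_self_of_mem U.2
  have hp' : (p.1, p.2) ≠ idLabel := by rwa [Prod.mk.eta]
  rw [npauli2_id]
  simp only [Matrix.mul_smul, Matrix.mul_one, Matrix.smul_mul, Matrix.trace_smul]
  rw [Matrix.mul_assoc, hU2, Matrix.mul_one, npauli2, Matrix.trace_smul,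
    trace_pauli2 p.1 p.2 hp']
  simp

end AuxF
/-- Second moments of Haar random 2-qubit gates: for the Haar probability measure `μ` on
`U(4)` and normalized 2-qubit Paulis `p, q`, the integral `∫ Tr(p·U·q·U†)² dμ(U)` equals `1`
if `p = q = (I⊗I)/2`, `0` if exactly one of `p, q` is `(I⊗I)/2`, and `1/15` otherwise. -/
theorem haar_second_moment
    [MeasurableSpace (Matrix.unitaryGroup (Fin 4) ℂ)]
    [BorelSpace (Matrix.unitaryGroup (Fin 4) ℂ)]
    (μ : Measure (Matrix.unitaryGroup (Fin 4) ℂ))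
    [μ.IsHaarMeasure] [IsProbabilityMeasure μ]
    (p q : PauliLabel × PauliLabel) :
    (p = idLabel → q = idLabel →
      ∫ U : Matrix.unitaryGroup (Fin 4) ℂ,
        (npauli2 p * (U : Matrix (Fin 4) (Fin 4) ℂ) * npauli2 q *
          (U : Matrix (Fin 4) (Fin 4) ℂ)ᴴ).trace ^ 2 ∂μ = 1) ∧
    (p = idLabel → q ≠ idLabel →
      ∫ U : Matrix.unitaryGroup (Fin 4) ℂ,
        (npauli2 p * (U : Matrix (Fin 4) (Fin 4) ℂ) * npauli2 q *
          (U : Matrix (Fin 4) (Fin 4) ℂ)ᴴ).trace ^ 2 ∂μ = 0) ∧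
    (p ≠ idLabel → q = idLabel →
      ∫ U : Matrix.unitaryGroup (Fin 4) ℂ,
        (npauli2 p * (U : Matrix (Fin 4) (Fin 4) ℂ) * npauli2 q *
          (U : Matrix (Fin 4) (Fin 4) ℂ)ᴴ).trace ^ 2 ∂μ = 0) ∧
    (p ≠ idLabel → q ≠ idLabel →
      ∫ U : Matrix.unitaryGroup (Fin 4) ℂ,
        (npauli2 p * (U : Matrix (Fin 4) (Fin 4) ℂ) * npauli2 q *
          (U : Matrix (Fin 4) (Fin 4) ℂ)ᴴ).trace ^ 2 ∂μ = 1 / 15) := by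
  refine ⟨?_, ?_, ?_, ?_⟩
  · -- both identity
    intro hp hq
    subst hp; subst hq
    calc ∫ U : Matrix.unitaryGroup (Fin 4) ℂ,
          (npauli2 idLabel * (U : Matrix (Fin 4) (Fin 4) ℂ) * npauli2 idLabel *
            (U : Matrix (Fin 4) (Fin 4) ℂ)ᴴ).trace ^ 2 ∂μ
        = ∫ _U : Matrix.unitaryGroup (Fin 4) ℂ, (1 : ℂ) ∂μ := by
          apply integral_congr_ae
          filter_upwards with U
          rw [point_id_id U]
          norm_num
      _ = 1 := by simp
  · -- p identity, q not
    intro hp hq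
    subst hp
    calc ∫ U : Matrix.unitaryGroup (Fin 4) ℂ,
          (npauli2 idLabel * (U : Matrix (Fin 4) (Fin 4) ℂ) * npauli2 q *
            (U : Matrix (Fin 4) (Fin 4) ℂ)ᴴ).trace ^ 2 ∂μ
        = ∫ _U : Matrix.unitaryGroup (Fin 4) ℂ, (0 : ℂ) ∂μ := by
          apply integral_congr_ae
          filter_upwards with U
          rw [point_id_q q hq U]
          norm_num
      _ = 0 := by simp
  · -- q identity, p not
    intro hp hq
    subst hq
    calc ∫ U : Matrix.unitaryGroup (Fin 4) ℂ,
          (npauli2 p * (U : Matrix (Fin 4) (Fin 4) ℂ) * npauli2 idLabel *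
            (U : Matrix (Fin 4) (Fin 4) ℂ)ᴴ).trace ^ 2 ∂μ
        = ∫ _U : Matrix.unitaryGroup (Fin 4) ℂ, (0 : ℂ) ∂μ := by
          apply integral_congr_ae
          filter_upwards with U
          rw [point_p_id p hp U]
          norm_num
      _ = 0 := by simp
  · -- both non-identity
    intro hp hq
    set J : PauliLabel × PauliLabel → ℂ := fun r =>
      ∫ U : Matrix.unitaryGroup (Fin 4) ℂ,
        (npauli2 r * (U : Matrix (Fin 4) (Fin 4) ℂ) * npauli2 q *
          (U : Matrix (Fin 4) (Fin 4) ℂ)ᴴ).trace ^ 2 ∂μ with hJ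
    have hJdef : ∀ r : PauliLabel × PauliLabel,
        (∫ U : Matrix.unitaryGroup (Fin 4) ℂ,
          (npauli2 r * (U : Matrix (Fin 4) (Fin 4) ℂ) * npauli2 q *
            (U : Matrix (Fin 4) (Fin 4) ℂ)ᴴ).trace ^ 2 ∂μ) = J r := fun r => rfl
    have hint : ∀ r : PauliLabel × PauliLabel,
        Integrable (fun U : Matrix.unitaryGroup (Fin 4) ℂ =>
          (npauli2 r * (U : Matrix (Fin 4) (Fin 4) ℂ) * npauli2 q *
            (U : Matrix (Fin 4) (Fin 4) ℂ)ᴴ).trace ^ 2) μ :=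
      fun r => integrable_trace_sq μ _ _
    have hsum : ∑ a : PauliLabel, ∑ b : PauliLabel, J (a, b) = 1 := by
      have h1 : ∀ a : PauliLabel,
          ∑ b : PauliLabel, J (a, b) = ∫ U : Matrix.unitaryGroup (Fin 4) ℂ,
            ∑ b : PauliLabel, (npauli2 (a, b) * (U : Matrix (Fin 4) (Fin 4) ℂ) * npauli2 q *
              (U : Matrix (Fin 4) (Fin 4) ℂ)ᴴ).trace ^ 2 ∂μ := fun a =>
        (integral_finset_sum _ fun b _ => hint (a, b)).symm
      calc ∑ a : PauliLabel, ∑ b : PauliLabel, J (a, b)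
          = ∑ a : PauliLabel, ∫ U : Matrix.unitaryGroup (Fin 4) ℂ,
            ∑ b : PauliLabel, (npauli2 (a, b) * (U : Matrix (Fin 4) (Fin 4) ℂ) * npauli2 q *
              (U : Matrix (Fin 4) (Fin 4) ℂ)ᴴ).trace ^ 2 ∂μ :=
            Finset.sum_congr rfl fun a _ => h1 a
        _ = ∫ U : Matrix.unitaryGroup (Fin 4) ℂ,
            ∑ a : PauliLabel, ∑ b : PauliLabel,
              (npauli2 (a, b) * (U : Matrix (Fin 4) (Fin 4) ℂ) * npauli2 q *
              (U : Matrix (Fin 4) (Fin 4) ℂ)ᴴ).trace ^ 2 ∂μ :=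
            (integral_finset_sum _ fun a _ =>
              integrable_finset_sum _ fun b _ => hint (a, b)).symm
        _ = ∫ _U : Matrix.unitaryGroup (Fin 4) ℂ, (1 : ℂ) ∂μ := by
            apply integral_congr_ae
            filter_upwards with U
            exact sum_g q U
        _ = 1 := by simp
    have hid : J (PauliLabel.I, PauliLabel.I) = 0 := by
      rw [← hJdef]
      calc ∫ U : Matrix.unitaryGroup (Fin 4) ℂ,
            (npauli2 (PauliLabel.I, PauliLabel.I) * (U : Matrix (Fin 4) (Fin 4) ℂ) * npauli2 q *
              (U : Matrix (Fin 4) (Fin 4) ℂ)ᴴ).trace ^ 2 ∂μ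
          = ∫ _U : Matrix.unitaryGroup (Fin 4) ℂ, (0 : ℂ) ∂μ := by
            apply integral_congr_ae
            filter_upwards with U
            rw [show ((PauliLabel.I, PauliLabel.I) : PauliLabel × PauliLabel) = idLabel from rfl,
              point_id_q q hq U]
            norm_num
        _ = 0 := by simp
    have eYI : J (PauliLabel.Y, PauliLabel.I) = J (PauliLabel.X, PauliLabel.I) := by
      rw [← hJdef, ← hJdef]; exact integral_conj_step μ SLu _ _ q (SL_conj PauliLabel.I)
    have eZI : J (PauliLabel.Z, PauliLabel.I) = J (PauliLabel.Y, PauliLabel.I) := by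
      rw [← hJdef, ← hJdef]; exact integral_conj_step μ VLu _ _ q (VL_conj PauliLabel.I)
    have eIX : J (PauliLabel.I, PauliLabel.X) = J (PauliLabel.X, PauliLabel.I) := by
      rw [← hJdef, ← hJdef]
      exact integral_conj_step μ SWu _ _ q (SW_conj PauliLabel.X PauliLabel.I)
    have eIY : J (PauliLabel.I, PauliLabel.Y) = J (PauliLabel.Y, PauliLabel.I) := by
      rw [← hJdef, ← hJdef]
      exact integral_conj_step μ SWu _ _ q (SW_conj PauliLabel.Y PauliLabel.I)
    have eIZ : J (PauliLabel.I, PauliLabel.Z) = J (PauliLabel.Z, PauliLabel.I) := by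
      rw [← hJdef, ← hJdef]
      exact integral_conj_step μ SWu _ _ q (SW_conj PauliLabel.Z PauliLabel.I)
    have eXX : J (PauliLabel.X, PauliLabel.X) = J (PauliLabel.X, PauliLabel.I) := by
      rw [← hJdef, ← hJdef]; exact integral_conj_step μ CNu _ _ q CN_conj
    have eXY : J (PauliLabel.X, PauliLabel.Y) = J (PauliLabel.X, PauliLabel.X) := by
      rw [← hJdef, ← hJdef]; exact integral_conj_step μ SRu _ _ q (SR_conj PauliLabel.X)
    have eXZ : J (PauliLabel.X, PauliLabel.Z) = J (PauliLabel.X, PauliLabel.Y) := by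
      rw [← hJdef, ← hJdef]; exact integral_conj_step μ VRu _ _ q (VR_conj PauliLabel.X)
    have eYX : J (PauliLabel.Y, PauliLabel.X) = J (PauliLabel.X, PauliLabel.X) := by
      rw [← hJdef, ← hJdef]; exact integral_conj_step μ SLu _ _ q (SL_conj PauliLabel.X)
    have eYY : J (PauliLabel.Y, PauliLabel.Y) = J (PauliLabel.Y, PauliLabel.X) := by
      rw [← hJdef, ← hJdef]; exact integral_conj_step μ SRu _ _ q (SR_conj PauliLabel.Y)
    have eYZ : J (PauliLabel.Y, PauliLabel.Z) = J (PauliLabel.Y, PauliLabel.Y) := by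
      rw [← hJdef, ← hJdef]; exact integral_conj_step μ VRu _ _ q (VR_conj PauliLabel.Y)
    have eZX : J (PauliLabel.Z, PauliLabel.X) = J (PauliLabel.Y, PauliLabel.X) := by
      rw [← hJdef, ← hJdef]; exact integral_conj_step μ VLu _ _ q (VL_conj PauliLabel.X)
    have eZY : J (PauliLabel.Z, PauliLabel.Y) = J (PauliLabel.Z, PauliLabel.X) := by
      rw [← hJdef, ← hJdef]; exact integral_conj_step μ SRu _ _ q (SR_conj PauliLabel.Z)
    have eZZ : J (PauliLabel.Z, PauliLabel.Z) = J (PauliLabel.Z, PauliLabel.Y) := by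
      rw [← hJdef, ← hJdef]; exact integral_conj_step μ VRu _ _ q (VR_conj PauliLabel.Z)
    rw [sum_pauliLabel (M := ℂ)] at hsum
    simp only [sum_pauliLabel (M := ℂ)] at hsum
    simp only [hid, eZZ, eZY, eZX, eYZ, eYY, eYX, eXZ, eXY, eXX, eIZ, eIY, eIX, eZI, eYI]
      at hsum
    rw [hJdef p]
    obtain ⟨a, b⟩ := p
    cases a <;> cases b <;>
      first
        | exact absurd rfl hp
        | ((try simp only [eZZ, eZY, eZX, eYZ, eYY, eYX, eXZ, eXY, eXX, eIZ, eIY, eIX, eZI, eYI]);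
            linear_combination hsum / 15)
end AuxD
end

section
/- (Legal paths have weight at least d+1.) Fix a circuit architecture of depth d on n qubits. If s = (s_0, …, s_d) is a legal Pauli path with Hamming weight |s| > 0, then every layer s_i (for i = 0, …, d) has at least one non-identity entry; consequently |s| ≥ d + 1. -/
instance : Fintype PauliLabel where
  elems := {PauliLabel.I, PauliLabel.X, PauliLabel.Y, PauliLabel.Z}
  complete := by intro x; cases x <;> simp

/-- A circuit architecture of depth `d` on `n` qubits: each layer `i ∈ {1,…,d}` is a
fixed-point-free involution `M i` of the qubit set (a perfect matching); the unordered pairs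
`{j, M i j}` are the 2-qubit gates of layer `i`. -/
structure Architecture (n d : ℕ) where
  M : Fin d → Fin n → Fin n
  involutive : ∀ i j, M i (M i j) = j
  fixedPointFree : ∀ i j, M i j ≠ j

/-- A Pauli path is a tuple `s = (s_0, …, s_d)` of layers, each assigning a Pauli label to
every qubit. -/
def PauliPath (n d : ℕ) : Type := Fin (d + 1) → Fin n → PauliLabel

/-- The Hamming weight of a Pauli path: the number of pairs `(i, j)` with `s i j ≠ I`. -/
def pathWeight {n d : ℕ} (s : PauliPath n d) : ℕ :=
  (Finset.univ.filter fun p : Fin (d + 1) × Fin n => s p.1 p.2 ≠ PauliLabel.I).card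

/-- A Pauli path is legal if (1) for every layer `i ∈ {1,…,d}` and every gate `{j, M i j}`,
the input pair `(s_{i−1} j, s_{i−1} (M i j))` is `(I, I)` iff the output pair
`(s_i j, s_i (M i j))` is `(I, I)`, and (2) `s_0` and `s_d` take values only in `{I, Z}`. -/
def IsLegal {n d : ℕ} (A : Architecture n d) (s : PauliPath n d) : Prop :=
  (∀ (i : Fin d) (j : Fin n),
      ((s i.castSucc j = PauliLabel.I ∧ s i.castSucc (A.M i j) = PauliLabel.I) ↔
        (s i.succ j = PauliLabel.I ∧ s i.succ (A.M i j) = PauliLabel.I))) ∧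
  (∀ j, s 0 j = PauliLabel.I ∨ s 0 j = PauliLabel.Z) ∧
  (∀ j, s (Fin.last d) j = PauliLabel.I ∨ s (Fin.last d) j = PauliLabel.Z)

/-- A legal Pauli path of positive Hamming weight has a non-identity entry in every layer,
and consequently has Hamming weight at least `d + 1`. -/
theorem legal_path_weight_lower_bound (n d : ℕ) (hn : Even n) (hn0 : 0 < n) (hd : 1 ≤ d)
    (A : Architecture n d) (s : PauliPath n d) (hs : IsLegal A s) (hw : 0 < pathWeight s) :
    (∀ i : Fin (d + 1), ∃ j : Fin n, s i j ≠ PauliLabel.I) ∧ d + 1 ≤ pathWeight s := by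
  classical
  set P : Fin (d + 1) → Prop := fun i => ∀ j, s i j = PauliLabel.I with hP
  have step : ∀ i : Fin d, P i.castSucc ↔ P i.succ := by
    intro i
    constructor
    · intro h j
      exact ((hs.1 i j).mp ⟨h j, h (A.M i j)⟩).1
    · intro h j
      exact ((hs.1 i j).mpr ⟨h j, h (A.M i j)⟩).1
  have all0 : ∀ i : Fin (d + 1), P i ↔ P 0 := by
    intro i
    induction i using Fin.induction with
    | zero => exact Iff.rfl
    | succ i ih => exact (step i).symm.trans ih
  have key : ∀ i : Fin (d + 1), ∃ j, s i j ≠ PauliLabel.I := by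
    rw [pathWeight, Finset.card_pos] at hw
    obtain ⟨p, hp⟩ := hw
    simp only [Finset.mem_filter] at hp
    intro i
    by_contra hc
    push_neg at hc
    exact hp.2 (((all0 p.1).mpr ((all0 i).mp hc)) p.2)
  refine ⟨key, ?_⟩
  choose f hf using key
  have : Finset.univ.image (fun i : Fin (d + 1) => (i, f i)) ⊆
      Finset.univ.filter fun p : Fin (d + 1) × Fin n => s p.1 p.2 ≠ PauliLabel.I := by
    intro p hp
    simp only [Finset.mem_image] at hp
    obtain ⟨i, _, rfl⟩ := hp
    simpa using hf i
  calc d + 1 = Fintype.card (Fin (d + 1)) := by simp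
    _ = (Finset.univ.image (fun i : Fin (d + 1) => (i, f i))).card := by
        rw [Finset.card_image_of_injective _ (fun a b h => (Prod.mk.injEq _ _ _ _ ▸ h).1)]
        simp
    _ ≤ pathWeight s := Finset.card_le_card this
end

section
/- (Upper bound on the number of low-weight legal paths.) Fix a circuit architecture of depth d on n qubits and let ℓ ≥ d + 1 be an integer. The number of legal Pauli paths s with 1 ≤ |s| ≤ ℓ is at most ℓ · n^{⌈ℓ/d⌉} · 18^ℓ. -/
namespace PPaux

open Finset

variable {n d : ℕ}

/-- support of a layer -/
def supp (f : Fin n → PauliLabel) : Finset (Fin n) :=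
  Finset.univ.filter fun j => f j ≠ PauliLabel.I

lemma pathWeight_eq_sum (s : PauliPath n d) :
    pathWeight s = ∑ i : Fin (d + 1), (supp (s i)).card := by
  classical
  unfold pathWeight
  rw [Finset.card_eq_sum_card_fiberwise (f := Prod.fst) (t := Finset.univ)
      (fun x _ => Finset.mem_univ _)]
  refine Finset.sum_congr rfl fun i _ => ?_
  rw [Finset.filter_filter]
  apply Finset.card_bij (fun p _ => p.2)
  · intro p hp
    simp only [Finset.mem_filter, Finset.mem_univ, true_and] at hp ⊢
    rw [supp, Finset.mem_filter]
    exact ⟨Finset.mem_univ _, hp.2 ▸ hp.1⟩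
  · intro p hp q hq hpq
    simp only [Finset.mem_filter, Finset.mem_univ, true_and] at hp hq
    exact Prod.ext (hp.2.trans hq.2.symm) hpq
  · intro j hj
    rw [supp, Finset.mem_filter] at hj
    exact ⟨(i, j), Finset.mem_filter.2 ⟨Finset.mem_univ _, hj.2, rfl⟩, rfl⟩

lemma supp_nonempty_of_legal {A : Architecture n d} {s : PauliPath n d}
    (hs : IsLegal A s) (hw : 1 ≤ pathWeight s) (i : Fin (d + 1)) :
    (supp (s i)).Nonempty := by
  classical
  -- propagation: nonemptiness of adjacent layers is equivalent
  have step : ∀ i : Fin d, (supp (s i.castSucc)).Nonempty ↔ (supp (s i.succ)).Nonempty := by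
    intro i
    constructor
    · rintro ⟨j, hj⟩
      rw [supp, Finset.mem_filter] at hj
      by_contra hne
      rw [Finset.not_nonempty_iff_eq_empty] at hne
      have hall : ∀ j', s i.succ j' = PauliLabel.I := by
        intro j'
        by_contra h'
        have : j' ∈ supp (s i.succ) := Finset.mem_filter.2 ⟨Finset.mem_univ j', h'⟩
        rw [hne] at this
        exact absurd this (Finset.notMem_empty j')
      exact hj.2 (((hs.1 i j).2 ⟨hall j, hall (A.M i j)⟩).1)
    · rintro ⟨j, hj⟩
      rw [supp, Finset.mem_filter] at hj
      by_contra hne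
      rw [Finset.not_nonempty_iff_eq_empty] at hne
      have hall : ∀ j', s i.castSucc j' = PauliLabel.I := by
        intro j'
        by_contra h'
        have : j' ∈ supp (s i.castSucc) := Finset.mem_filter.2 ⟨Finset.mem_univ j', h'⟩
        rw [hne] at this
        exact absurd this (Finset.notMem_empty j')
      exact hj.2 (((hs.1 i j).1 ⟨hall j, hall (A.M i j)⟩).1)
  have iff0 : ∀ i : Fin (d + 1), ((supp (s i)).Nonempty ↔ (supp (s 0)).Nonempty) := by
    intro i
    induction i using Fin.induction with
    | zero => rfl
    | succ i ih => exact (step i).symm.trans ih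
  -- some layer is nonempty
  have : ∃ p : Fin (d + 1) × Fin n, s p.1 p.2 ≠ PauliLabel.I := by
    by_contra h
    push_neg at h
    have : pathWeight s = 0 := by
      rw [pathWeight, Finset.card_eq_zero, Finset.filter_eq_empty_iff]
      intro p _; simpa using h p
    omega
  obtain ⟨p, hp⟩ := this
  have h1 : (supp (s p.1)).Nonempty := ⟨p.2, Finset.mem_filter.2 ⟨Finset.mem_univ _, hp⟩⟩
  exact (iff0 i).2 ((iff0 p.1).1 h1)

section
variable (A : Architecture n d) (s : PauliPath n d)

/-- qubits in an active gate of gate-layer `i` (characterized via the input side). -/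
def act (i : Fin d) : Finset (Fin n) :=
  Finset.univ.filter fun j =>
    ¬(s i.castSucc j = PauliLabel.I ∧ s i.castSucc (A.M i j) = PauliLabel.I)

lemma mem_act_iff_succ (hs : IsLegal A s) (i : Fin d) (j : Fin n) :
    j ∈ act A s i ↔ ¬(s i.succ j = PauliLabel.I ∧ s i.succ (A.M i j) = PauliLabel.I) := by
  rw [act, Finset.mem_filter]
  simp only [Finset.mem_univ, true_and]
  exact not_congr (hs.1 i j)

lemma act_card_le (i : Fin d) (f : Fin n → PauliLabel)
    (hf : ∀ j, j ∈ act A s i → f j ≠ PauliLabel.I ∨ f (A.M i j) ≠ PauliLabel.I) :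
    (act A s i).card ≤ 2 * (supp f).card := by
  have hsub : act A s i ⊆ supp f ∪ (supp f).image (A.M i) := by
    intro j hj
    rcases hf j hj with h | h
    · exact Finset.mem_union_left _ (Finset.mem_filter.2 ⟨Finset.mem_univ _, h⟩)
    · refine Finset.mem_union_right _ (Finset.mem_image.2 ⟨A.M i j, ?_, A.involutive i j⟩)
      exact Finset.mem_filter.2 ⟨Finset.mem_univ _, h⟩
  calc (act A s i).card ≤ (supp f ∪ (supp f).image (A.M i)).card :=
        Finset.card_le_card hsub
    _ ≤ (supp f).card + ((supp f).image (A.M i)).card := Finset.card_union_le _ _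
    _ ≤ (supp f).card + (supp f).card :=
        Nat.add_le_add_left (Finset.card_image_le) _
    _ = 2 * (supp f).card := by ring

variable (c : Fin (d + 1))

/-- the "far" layer of gate-layer `i`, relative to center `c`. -/
def far (i : Fin d) : Fin (d + 1) := if (c : ℕ) ≤ i then i.succ else i.castSucc

/-- list of labels of the far layer on the active qubits of gate-layer `i`. -/
def block (i : Fin d) : List PauliLabel :=
  ((act A s i).sort (· ≤ ·)).map (s (far c i))

def centerList : List PauliLabel :=
  ((supp (s c)).sort (· ≤ ·)).map (s c)

def fwdStream : ℕ → List PauliLabel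
  | 0 => centerList s c
  | (m + 1) => fwdStream m ++
      (if h : (c : ℕ) + m < d then block A s c ⟨(c : ℕ) + m, h⟩ else [])

def bwdBlocks : ℕ → List PauliLabel
  | 0 => []
  | (r + 1) => bwdBlocks r ++
      (if h : r < (c : ℕ) then block A s c ⟨(c : ℕ) - 1 - r, by omega⟩ else [])

def stream : List PauliLabel := fwdStream A s c (d - (c : ℕ)) ++ bwdBlocks A s c (c : ℕ)

end

section
variable (A : Architecture n d) (s : PauliPath n d) (c : Fin (d + 1))

lemma fwdStream_succ_prefix (m : ℕ) : fwdStream A s c m <+: fwdStream A s c (m + 1) :=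
  ⟨_, rfl⟩

lemma fwdStream_mono {m m' : ℕ} (h : m ≤ m') : fwdStream A s c m <+: fwdStream A s c m' := by
  induction m' with
  | zero => rw [Nat.le_zero.1 h]
  | succ m' ih =>
    rcases Nat.lt_or_ge m (m' + 1) with h' | h'
    · exact (ih (by omega)).trans (fwdStream_succ_prefix A s c m')
    · have : m = m' + 1 := by omega
      rw [this]

lemma bwdBlocks_mono {m m' : ℕ} (h : m ≤ m') : bwdBlocks A s c m <+: bwdBlocks A s c m' := by
  induction m' with
  | zero => rw [Nat.le_zero.1 h]
  | succ m' ih =>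
    rcases Nat.lt_or_ge m (m' + 1) with h' | h'
    · exact (ih (by omega)).trans ⟨_, rfl⟩
    · have : m = m' + 1 := by omega
      rw [this]

lemma fwd_prefix_stream (m : ℕ) : fwdStream A s c m <+: stream A s c := by
  rcases Nat.lt_or_ge (d - (c : ℕ)) m with h | h
  case inr => exact (fwdStream_mono A s c h).trans ⟨_, rfl⟩
  case inl =>
    have stable : ∀ m', d - (c : ℕ) ≤ m' → fwdStream A s c m' = fwdStream A s c (d - (c : ℕ)) := by
      intro m'
      induction m' with
      | zero => intro h'; congr 1; omega
      | succ m' ih =>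
        intro h'
        rcases Nat.lt_or_ge m' (d - (c : ℕ)) with h2 | h2
        · have : d - (c : ℕ) = m' + 1 := by omega
          rw [this]
        · have hc : ¬ ((c : ℕ) + m' < d) := by omega
          show fwdStream A s c m' ++ _ = _
          rw [dif_neg hc, List.append_nil, ih h2]
    rw [stable m (by omega)]
    exact ⟨_, rfl⟩

lemma fwd_bwd_prefix_stream {r : ℕ} (hr : r ≤ (c : ℕ)) :
    fwdStream A s c (d - (c : ℕ)) ++ bwdBlocks A s c r <+: stream A s c := by
  obtain ⟨t, ht⟩ := bwdBlocks_mono A s c hr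
  exact ⟨t, by rw [stream, ← ht, List.append_assoc]⟩

/-- token extraction from a stream via a prefix decomposition -/
lemma token_eq {S Lpre B : List PauliLabel} (h : Lpre ++ B <+: S) {q : ℕ} (hq : q < B.length) :
    S.getD (Lpre.length + q) PauliLabel.I = B.get ⟨q, hq⟩ := by
  have hlen : Lpre.length + q < (Lpre ++ B).length := by
    rw [List.length_append]; omega
  have hlen' : Lpre.length + q < S.length := lt_of_lt_of_le hlen h.length_le
  rw [List.getD_eq_getElem _ _ hlen', ← List.IsPrefix.getElem h hlen]
  rw [List.getElem_append_right (by omega)]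
  simp
end

section
variable {A : Architecture n d} {s : PauliPath n d} (c : Fin (d + 1))

lemma centerList_length : (centerList s c).length = (supp (s c)).card := by
  rw [centerList, List.length_map, Finset.length_sort]

lemma block_length (i : Fin d) : (block A s c i).length = (act A s i).card := by
  rw [block, List.length_map, Finset.length_sort]

lemma fwd_len (hs : IsLegal A s) (m : ℕ) :
    (fwdStream A s c m).length ≤ (supp (s c)).card +
      2 * ∑ i' ∈ Finset.univ.filter
          (fun i' : Fin (d + 1) => (c : ℕ) < (i' : ℕ) ∧ (i' : ℕ) ≤ (c : ℕ) + m),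
        (supp (s i')).card := by
  induction m with
  | zero => rw [fwdStream, centerList_length]; omega
  | succ m ih =>
    have hsub : Finset.univ.filter
          (fun i' : Fin (d + 1) => (c : ℕ) < (i' : ℕ) ∧ (i' : ℕ) ≤ (c : ℕ) + m) ⊆
        Finset.univ.filter
          (fun i' : Fin (d + 1) => (c : ℕ) < (i' : ℕ) ∧ (i' : ℕ) ≤ (c : ℕ) + (m + 1)) := by
      intro x hx
      simp only [Finset.mem_filter] at hx ⊢
      exact ⟨hx.1, hx.2.1, by omega⟩
    show (fwdStream A s c m ++ _).length ≤ _
    rw [List.length_append]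
    by_cases h : (c : ℕ) + m < d
    · rw [dif_pos h, block_length]
      set a : Fin (d + 1) := ⟨(c : ℕ) + m + 1, by omega⟩ with ha
      have hav : (a : ℕ) = (c : ℕ) + m + 1 := rfl
      have hact : (act A s ⟨(c : ℕ) + m, h⟩).card ≤ 2 * (supp (s a)).card := by
        apply act_card_le
        intro j hj
        rw [mem_act_iff_succ A s hs] at hj
        have heq : (⟨(c : ℕ) + m, h⟩ : Fin d).succ = a := by
          apply Fin.ext; simp [hav]
        rw [heq] at hj
        tauto
      have hmem : a ∈ Finset.univ.filter
          (fun i' : Fin (d + 1) => (c : ℕ) < (i' : ℕ) ∧ (i' : ℕ) ≤ (c : ℕ) + (m + 1)) :=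
        Finset.mem_filter.2 ⟨Finset.mem_univ _, by omega, by omega⟩
      have hnot : a ∉ Finset.univ.filter
          (fun i' : Fin (d + 1) => (c : ℕ) < (i' : ℕ) ∧ (i' : ℕ) ≤ (c : ℕ) + m) := by
        intro hcon
        have := (Finset.mem_filter.1 hcon).2.2
        omega
      have hins : insert a (Finset.univ.filter
          (fun i' : Fin (d + 1) => (c : ℕ) < (i' : ℕ) ∧ (i' : ℕ) ≤ (c : ℕ) + m)) ⊆
          Finset.univ.filter
          (fun i' : Fin (d + 1) => (c : ℕ) < (i' : ℕ) ∧ (i' : ℕ) ≤ (c : ℕ) + (m + 1)) := by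
        intro x hx
        rcases Finset.mem_insert.1 hx with h' | h'
        · rw [h']; exact hmem
        · exact hsub h'
      have hsum : ∑ i' ∈ insert a (Finset.univ.filter
            (fun i' : Fin (d + 1) => (c : ℕ) < (i' : ℕ) ∧ (i' : ℕ) ≤ (c : ℕ) + m)),
            (supp (s i')).card ≤
          ∑ i' ∈ Finset.univ.filter
            (fun i' : Fin (d + 1) => (c : ℕ) < (i' : ℕ) ∧ (i' : ℕ) ≤ (c : ℕ) + (m + 1)),
            (supp (s i')).card :=
        Finset.sum_le_sum_of_subset hins
      rw [Finset.sum_insert hnot] at hsum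
      omega
    · rw [dif_neg h, List.length_nil]
      have hsum : ∑ i' ∈ Finset.univ.filter
            (fun i' : Fin (d + 1) => (c : ℕ) < (i' : ℕ) ∧ (i' : ℕ) ≤ (c : ℕ) + m),
            (supp (s i')).card ≤
          ∑ i' ∈ Finset.univ.filter
            (fun i' : Fin (d + 1) => (c : ℕ) < (i' : ℕ) ∧ (i' : ℕ) ≤ (c : ℕ) + (m + 1)),
            (supp (s i')).card :=
        Finset.sum_le_sum_of_subset hsub
      omega

lemma bwd_len (r : ℕ) :
    (bwdBlocks A s c r).length ≤
      2 * ∑ i' ∈ Finset.univ.filter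
          (fun i' : Fin (d + 1) => (i' : ℕ) < (c : ℕ) ∧ (c : ℕ) ≤ (i' : ℕ) + r),
        (supp (s i')).card := by
  induction r with
  | zero => simp [bwdBlocks]
  | succ r ih =>
    have hsub : Finset.univ.filter
          (fun i' : Fin (d + 1) => (i' : ℕ) < (c : ℕ) ∧ (c : ℕ) ≤ (i' : ℕ) + r) ⊆
        Finset.univ.filter
          (fun i' : Fin (d + 1) => (i' : ℕ) < (c : ℕ) ∧ (c : ℕ) ≤ (i' : ℕ) + (r + 1)) := by
      intro x hx
      simp only [Finset.mem_filter] at hx ⊢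
      exact ⟨hx.1, hx.2.1, by omega⟩
    show (bwdBlocks A s c r ++ _).length ≤ _
    rw [List.length_append]
    by_cases h : r < (c : ℕ)
    · rw [dif_pos h, block_length]
      set a : Fin (d + 1) := ⟨(c : ℕ) - 1 - r, by omega⟩ with ha
      have hav : (a : ℕ) = (c : ℕ) - 1 - r := rfl
      have hact : (act A s ⟨(c : ℕ) - 1 - r, by omega⟩).card ≤ 2 * (supp (s a)).card := by
        apply act_card_le
        intro j hj
        rw [act, Finset.mem_filter] at hj
        have heq : (⟨(c : ℕ) - 1 - r, by omega⟩ : Fin d).castSucc = a := by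
          apply Fin.ext; simp [hav]
        rw [heq] at hj
        tauto
      have hmem : a ∈ Finset.univ.filter
          (fun i' : Fin (d + 1) => (i' : ℕ) < (c : ℕ) ∧ (c : ℕ) ≤ (i' : ℕ) + (r + 1)) :=
        Finset.mem_filter.2 ⟨Finset.mem_univ _, by omega, by omega⟩
      have hnot : a ∉ Finset.univ.filter
          (fun i' : Fin (d + 1) => (i' : ℕ) < (c : ℕ) ∧ (c : ℕ) ≤ (i' : ℕ) + r) := by
        intro hcon
        have := (Finset.mem_filter.1 hcon).2.2
        omega
      have hins : insert a (Finset.univ.filter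
          (fun i' : Fin (d + 1) => (i' : ℕ) < (c : ℕ) ∧ (c : ℕ) ≤ (i' : ℕ) + r)) ⊆
          Finset.univ.filter
          (fun i' : Fin (d + 1) => (i' : ℕ) < (c : ℕ) ∧ (c : ℕ) ≤ (i' : ℕ) + (r + 1)) := by
        intro x hx
        rcases Finset.mem_insert.1 hx with h' | h'
        · rw [h']; exact hmem
        · exact hsub h'
      have hsum : ∑ i' ∈ insert a (Finset.univ.filter
            (fun i' : Fin (d + 1) => (i' : ℕ) < (c : ℕ) ∧ (c : ℕ) ≤ (i' : ℕ) + r)),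
            (supp (s i')).card ≤
          ∑ i' ∈ Finset.univ.filter
            (fun i' : Fin (d + 1) => (i' : ℕ) < (c : ℕ) ∧ (c : ℕ) ≤ (i' : ℕ) + (r + 1)),
            (supp (s i')).card :=
        Finset.sum_le_sum_of_subset hins
      rw [Finset.sum_insert hnot] at hsum
      omega
    · rw [dif_neg h, List.length_nil]
      have hsum : ∑ i' ∈ Finset.univ.filter
            (fun i' : Fin (d + 1) => (i' : ℕ) < (c : ℕ) ∧ (c : ℕ) ≤ (i' : ℕ) + r),
            (supp (s i')).card ≤
          ∑ i' ∈ Finset.univ.filter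
            (fun i' : Fin (d + 1) => (i' : ℕ) < (c : ℕ) ∧ (c : ℕ) ≤ (i' : ℕ) + (r + 1)),
            (supp (s i')).card :=
        Finset.sum_le_sum_of_subset hsub
      omega

lemma stream_length_le (hs : IsLegal A s) :
    (stream A s c).length ≤ 2 * pathWeight s := by
  classical
  have h1 := fwd_len c hs (d - (c : ℕ))
  have h2 := bwd_len (A := A) (s := s) c (c : ℕ)
  rw [stream, List.length_append]
  have hWs := pathWeight_eq_sum s
  -- the two index sets are within filter (> c) and filter (< c)
  have hfsub : ∑ i' ∈ Finset.univ.filter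
        (fun i' : Fin (d + 1) => (c : ℕ) < (i' : ℕ) ∧ (i' : ℕ) ≤ (c : ℕ) + (d - (c : ℕ))),
        (supp (s i')).card ≤
      ∑ i' ∈ Finset.univ.filter (fun i' : Fin (d + 1) => (c : ℕ) < (i' : ℕ)),
        (supp (s i')).card :=
    Finset.sum_le_sum_of_subset (fun x hx => by
      simp only [Finset.mem_filter] at hx ⊢
      exact ⟨hx.1, hx.2.1⟩)
  have hbsub : ∑ i' ∈ Finset.univ.filter
        (fun i' : Fin (d + 1) => (i' : ℕ) < (c : ℕ) ∧ (c : ℕ) ≤ (i' : ℕ) + (c : ℕ)),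
        (supp (s i')).card ≤
      ∑ i' ∈ Finset.univ.filter (fun i' : Fin (d + 1) => (i' : ℕ) < (c : ℕ)),
        (supp (s i')).card :=
    Finset.sum_le_sum_of_subset (fun x hx => by
      simp only [Finset.mem_filter] at hx ⊢
      exact ⟨hx.1, hx.2.1⟩)
  -- split the total weight
  have hsplit : ∑ i' ∈ Finset.univ.filter (fun i' : Fin (d + 1) => (i' : ℕ) < (c : ℕ)),
        (supp (s i')).card +
      ∑ i' ∈ Finset.univ.filter (fun i' : Fin (d + 1) => ¬ ((i' : ℕ) < (c : ℕ))),
        (supp (s i')).card = ∑ i' : Fin (d + 1), (supp (s i')).card :=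
    Finset.sum_filter_add_sum_filter_not _ _ _
  have hcnot : c ∉ Finset.univ.filter (fun i' : Fin (d + 1) => (c : ℕ) < (i' : ℕ)) := by
    intro hcon
    exact absurd (Finset.mem_filter.1 hcon).2 (by omega)
  have hins2 : insert c (Finset.univ.filter (fun i' : Fin (d + 1) => (c : ℕ) < (i' : ℕ))) ⊆
      Finset.univ.filter (fun i' : Fin (d + 1) => ¬ ((i' : ℕ) < (c : ℕ))) := by
    intro x hx
    rcases Finset.mem_insert.1 hx with h' | h'
    · rw [h']; exact Finset.mem_filter.2 ⟨Finset.mem_univ _, by omega⟩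
    · have := (Finset.mem_filter.1 h').2
      exact Finset.mem_filter.2 ⟨Finset.mem_univ _, by omega⟩
  have hsum2 : ∑ i' ∈ insert c (Finset.univ.filter
        (fun i' : Fin (d + 1) => (c : ℕ) < (i' : ℕ))), (supp (s i')).card ≤
      ∑ i' ∈ Finset.univ.filter (fun i' : Fin (d + 1) => ¬ ((i' : ℕ) < (c : ℕ))),
        (supp (s i')).card :=
    Finset.sum_le_sum_of_subset hins2
  rw [Finset.sum_insert hcnot] at hsum2
  omega
end

section
variable {n d : ℕ}

noncomputable def enumF (T : Finset (Fin n)) (hn0 : 0 < n) (k : ℕ) : Fin k → Fin n :=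
  fun m => (T.sort (· ≤ ·)).getD m ((T.sort (· ≤ ·)).headD ⟨0, hn0⟩)

lemma enumF_mem (T : Finset (Fin n)) (hn0 : 0 < n) (k : ℕ) (hne : T.Nonempty) (m : Fin k) :
    enumF T hn0 k m ∈ T := by
  rw [enumF]
  rcases hL : T.sort (· ≤ ·) with _ | ⟨a, t⟩
  · exfalso
    have := Finset.length_sort (α := Fin n) (· ≤ ·) (s := T)
    rw [hL] at this
    simp only [List.length_nil] at this
    exact absurd (Finset.card_pos.2 hne) (by omega)
  · rcases Nat.lt_or_ge (m : ℕ) ((a :: t).length) with h | h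
    · rw [List.getD_eq_getElem _ _ h]
      refine (Finset.mem_sort (α := Fin n) (· ≤ ·)).1 ?_
      rw [hL]
      exact List.getElem_mem h
    · rw [List.getD_eq_default _ _ h]
      refine (Finset.mem_sort (α := Fin n) (· ≤ ·)).1 ?_
      rw [hL]
      exact List.mem_cons_self

lemma enumF_surj (T : Finset (Fin n)) (hn0 : 0 < n) (k : ℕ) (hcard : T.card ≤ k)
    {j : Fin n} (hj : j ∈ T) : ∃ m : Fin k, enumF T hn0 k m = j := by
  have hj' : j ∈ T.sort (· ≤ ·) := (Finset.mem_sort _).2 hj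
  obtain ⟨idx, hidx, hval⟩ := List.getElem_of_mem hj'
  have hlen : (T.sort (· ≤ ·)).length = T.card := Finset.length_sort _
  refine ⟨⟨idx, by omega⟩, ?_⟩
  rw [enumF]
  show (T.sort (· ≤ ·)).getD idx _ = j
  rw [List.getD_eq_getElem _ _ hidx, hval]

noncomputable def minLayer (s : PauliPath n d) : Fin (d + 1) :=
  Classical.choose
    (Finset.exists_min_image Finset.univ (fun i => (supp (s i)).card) ⟨0, Finset.mem_univ 0⟩)

lemma minLayer_spec (s : PauliPath n d) (i : Fin (d + 1)) :
    (supp (s (minLayer s))).card ≤ (supp (s i)).card :=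
  (Classical.choose_spec
    (Finset.exists_min_image Finset.univ (fun i => (supp (s i)).card)
      ⟨0, Finset.mem_univ 0⟩)).2 i (Finset.mem_univ i)

noncomputable def code (A : Architecture n d) (hn0 : 0 < n) (ℓ k : ℕ) (hdl : d + 1 ≤ ℓ)
    (x : {s : PauliPath n d // IsLegal A s ∧ 1 ≤ pathWeight s ∧ pathWeight s ≤ ℓ}) :
    Fin ℓ × (Fin k → Fin n) × (Fin (2 * ℓ) → PauliLabel) :=
  (⟨((minLayer x.val) : ℕ), by have := (minLayer x.val).isLt; omega⟩,
   enumF (supp (x.val (minLayer x.val))) hn0 k,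
   fun p => (stream A x.val (minLayer x.val)).getD p PauliLabel.I)

lemma code_injective (A : Architecture n d) (hn0 : 0 < n) (ℓ k : ℕ) (hdl : d + 1 ≤ ℓ)
    (hk : ∀ s : PauliPath n d, pathWeight s ≤ ℓ → (supp (s (minLayer s))).card ≤ k) :
    Function.Injective (code A hn0 ℓ k hdl) := by
  classical
  rintro x y hxy
  have h1 : (code A hn0 ℓ k hdl x).1 = (code A hn0 ℓ k hdl y).1 := congrArg Prod.fst hxy
  have h2 : (code A hn0 ℓ k hdl x).2.1 = (code A hn0 ℓ k hdl y).2.1 := congrArg (fun z => z.2.1) hxy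
  have h3 : (code A hn0 ℓ k hdl x).2.2 = (code A hn0 ℓ k hdl y).2.2 := congrArg (fun z => z.2.2) hxy
  clear hxy
  obtain ⟨s, hsL, hsw1, hswl⟩ := x
  obtain ⟨s', hsL', hsw1', hswl'⟩ := y
  simp only [code] at h1 h2 h3
  have hcc : minLayer s' = minLayer s := by
    have := congrArg Fin.val h1
    exact Fin.ext (by simpa using this.symm)
  rw [hcc] at h2 h3
  have hkc := hk s hswl
  have hkc' := hk s' hswl'
  rw [hcc] at hkc'
  obtain ⟨c, hcv⟩ : ∃ c, minLayer s = c := ⟨_, rfl⟩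
  rw [hcv] at h2 h3 hkc hkc'
  have hcd := c.isLt
  have hne : (supp (s c)).Nonempty := supp_nonempty_of_legal hsL hsw1 c
  have hne' : (supp (s' c)).Nonempty := supp_nonempty_of_legal hsL' hsw1' c
  -- supports at the center agree
  have hsupp : supp (s c) = supp (s' c) := by
    apply Finset.ext
    intro j
    constructor
    · intro hj
      obtain ⟨m, hm⟩ := enumF_surj _ hn0 k hkc hj
      rw [h2] at hm
      exact hm ▸ enumF_mem _ hn0 k hne' m
    · intro hj
      obtain ⟨m, hm⟩ := enumF_surj _ hn0 k hkc' hj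
      rw [← h2] at hm
      exact hm ▸ enumF_mem _ hn0 k hne m
  -- stream tokens agree
  have hlen : (stream A s c).length ≤ 2 * ℓ := by
    have := stream_length_le c hsL; omega
  have hlen' : (stream A s' c).length ≤ 2 * ℓ := by
    have := stream_length_le (s := s') c hsL'; omega
  have htok : ∀ p : ℕ, p < 2 * ℓ →
      (stream A s c).getD p PauliLabel.I = (stream A s' c).getD p PauliLabel.I := by
    intro p hp
    exact congrFun h3 ⟨p, hp⟩
  -- aligned blocks of the two streams agree
  have blocksEq : ∀ {Lp B Lp' B' : List PauliLabel}, Lp ++ B <+: stream A s c →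
      Lp' ++ B' <+: stream A s' c → Lp.length = Lp'.length → B.length = B'.length →
      B = B' := by
    intro Lp B Lp' B' hpre hpre' hLp hB
    apply List.ext_get hB
    intro q hq hq'
    have t1 := token_eq hpre hq
    have t2 := token_eq hpre' hq'
    have hpos : Lp.length + q < 2 * ℓ := by
      have h5 : Lp.length + q < (Lp ++ B).length := by rw [List.length_append]; omega
      have h6 := hpre.length_le
      omega
    rw [← t1, ← t2, ← hLp]
    exact htok _ hpos
  -- the center layers agree
  have hcenter : s c = s' c := by
    have hclen : (centerList s c).length = (centerList s' c).length := by
      rw [centerList_length, centerList_length, hsupp]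
    have hC : centerList s c = centerList s' c := by
      refine blocksEq (Lp := []) (Lp' := []) ?_ ?_ rfl hclen
      · exact List.nil_append _ ▸ fwd_prefix_stream A s c 0
      · exact List.nil_append _ ▸ fwd_prefix_stream A s' c 0
    funext j
    by_cases hj : j ∈ supp (s c)
    · rw [centerList, centerList, hsupp] at hC
      exact List.map_inj_left.1 hC j ((Finset.mem_sort _).2 (hsupp ▸ hj))
    · have hj' : j ∉ supp (s' c) := hsupp ▸ hj
      rw [supp, Finset.mem_filter] at hj hj'
      push_neg at hj hj'
      rw [hj (Finset.mem_univ j), hj' (Finset.mem_univ j)]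
  -- forward induction
  have fwdEq : ∀ m : ℕ, fwdStream A s c m = fwdStream A s' c m ∧
      (∀ i : Fin (d + 1), (c : ℕ) ≤ (i : ℕ) → (i : ℕ) ≤ (c : ℕ) + m → s i = s' i) := by
    intro m
    induction m with
    | zero =>
      refine ⟨?_, fun i hi1 hi2 => ?_⟩
      · rw [show fwdStream A s c 0 = centerList s c from rfl,
          show fwdStream A s' c 0 = centerList s' c from rfl, centerList, centerList, hcenter]
      · have : i = c := Fin.ext (by omega)
        rw [this]; exact hcenter
    | succ m ih =>
      by_cases h : (c : ℕ) + m < d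
      · obtain ⟨i, hiv⟩ : ∃ i : Fin d, (i : ℕ) = (c : ℕ) + m := ⟨⟨(c : ℕ) + m, h⟩, rfl⟩
        have hmk : (⟨(c : ℕ) + m, h⟩ : Fin d) = i := Fin.ext (by rw [hiv])
        have hics : ((i.castSucc : Fin (d + 1)) : ℕ) = (c : ℕ) + m := by
          rw [Fin.coe_castSucc, hiv]
        have hisv : ((i.succ : Fin (d + 1)) : ℕ) = (c : ℕ) + m + 1 := by
          rw [Fin.val_succ, hiv]
        have hlayer_cs : s i.castSucc = s' i.castSucc :=
          ih.2 i.castSucc (by omega) (by omega)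
        have hact : act A s i = act A s' i := by
          rw [act, act, hlayer_cs]
        have hfar : far c i = i.succ := by
          rw [far, if_pos (by omega)]
        have hstep : fwdStream A s c (m + 1) = fwdStream A s c m ++ block A s c i := by
          show fwdStream A s c m ++ _ = _
          rw [dif_pos h, hmk]
        have hstep' : fwdStream A s' c (m + 1) = fwdStream A s' c m ++ block A s' c i := by
          show fwdStream A s' c m ++ _ = _
          rw [dif_pos h, hmk]
        have hBeq : block A s c i = block A s' c i := by
          refine blocksEq (hstep ▸ fwd_prefix_stream A s c (m + 1))
            (hstep' ▸ fwd_prefix_stream A s' c (m + 1)) (by rw [ih.1]) ?_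
          rw [block_length, block_length, hact]
        have hsucc : s i.succ = s' i.succ := by
          funext j
          by_cases hj : j ∈ act A s i
          · rw [block, block, hfar, hact] at hBeq
            exact List.map_inj_left.1 hBeq j ((Finset.mem_sort _).2 (hact ▸ hj))
          · have hj' : j ∉ act A s' i := hact ▸ hj
            rw [mem_act_iff_succ A s hsL] at hj
            rw [mem_act_iff_succ A s' hsL'] at hj'
            push_neg at hj hj'
            rw [hj.1, hj'.1]
        refine ⟨by rw [hstep, hstep', ih.1, hBeq], fun i' hi1 hi2 => ?_⟩
        rcases Nat.lt_or_ge ((i' : ℕ)) ((c : ℕ) + m + 1) with h' | h'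
        · exact ih.2 i' hi1 (by omega)
        · have : i' = i.succ := Fin.ext (by omega)
          rw [this]; exact hsucc
      · have hstep : fwdStream A s c (m + 1) = fwdStream A s c m := by
          show fwdStream A s c m ++ _ = _
          rw [dif_neg h, List.append_nil]
        have hstep' : fwdStream A s' c (m + 1) = fwdStream A s' c m := by
          show fwdStream A s' c m ++ _ = _
          rw [dif_neg h, List.append_nil]
        refine ⟨by rw [hstep, hstep', ih.1], fun i' hi1 hi2 => ?_⟩
        have := i'.isLt
        exact ih.2 i' hi1 (by omega)
  -- backward induction
  have bwdEq : ∀ r : ℕ, bwdBlocks A s c r = bwdBlocks A s' c r ∧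
      (∀ i : Fin (d + 1), (c : ℕ) - r ≤ (i : ℕ) → (i : ℕ) ≤ (c : ℕ) → s i = s' i) := by
    intro r
    induction r with
    | zero =>
      refine ⟨rfl, fun i hi1 hi2 => ?_⟩
      have : i = c := Fin.ext (by omega)
      rw [this]; exact hcenter
    | succ r ih =>
      by_cases h : r < (c : ℕ)
      · have hid : (c : ℕ) - 1 - r < d := by omega
        obtain ⟨i, hiv⟩ : ∃ i : Fin d, (i : ℕ) = (c : ℕ) - 1 - r := ⟨⟨(c : ℕ) - 1 - r, hid⟩, rfl⟩
        have hmk : (⟨(c : ℕ) - 1 - r, hid⟩ : Fin d) = i := Fin.ext (by rw [hiv])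
        have hics : ((i.castSucc : Fin (d + 1)) : ℕ) = (c : ℕ) - 1 - r := by
          rw [Fin.coe_castSucc, hiv]
        have hisv : ((i.succ : Fin (d + 1)) : ℕ) = (c : ℕ) - 1 - r + 1 := by
          rw [Fin.val_succ, hiv]
        have hlayer_su : s i.succ = s' i.succ :=
          ih.2 i.succ (by omega) (by omega)
        have hact : act A s i = act A s' i := by
          apply Finset.ext
          intro j
          rw [mem_act_iff_succ A s hsL, mem_act_iff_succ A s' hsL', hlayer_su]
        have hfar : far c i = i.castSucc := by
          rw [far, if_neg (by omega)]
        have e1 : bwdBlocks A s c (r + 1) = bwdBlocks A s c r ++ block A s c i := by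
          show bwdBlocks A s c r ++ _ = _
          rw [dif_pos h, hmk]
        have e1' : bwdBlocks A s' c (r + 1) = bwdBlocks A s' c r ++ block A s' c i := by
          show bwdBlocks A s' c r ++ _ = _
          rw [dif_pos h, hmk]
        have hstep : fwdStream A s c (d - (c : ℕ)) ++ bwdBlocks A s c (r + 1) =
            (fwdStream A s c (d - (c : ℕ)) ++ bwdBlocks A s c r) ++ block A s c i := by
          rw [e1, List.append_assoc]
        have hstep' : fwdStream A s' c (d - (c : ℕ)) ++ bwdBlocks A s' c (r + 1) =
            (fwdStream A s' c (d - (c : ℕ)) ++ bwdBlocks A s' c r) ++ block A s' c i := by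
          rw [e1', List.append_assoc]
        have hBeq : block A s c i = block A s' c i := by
          refine blocksEq (hstep ▸ fwd_bwd_prefix_stream A s c (r := r + 1) (by omega))
            (hstep' ▸ fwd_bwd_prefix_stream A s' c (r := r + 1) (by omega)) ?_ ?_
          · rw [List.length_append, List.length_append, ih.1, (fwdEq (d - (c : ℕ))).1]
          · rw [block_length, block_length, hact]
        have hcastEq : s i.castSucc = s' i.castSucc := by
          funext j
          by_cases hj : j ∈ act A s i
          · rw [block, block, hfar, hact] at hBeq
            exact List.map_inj_left.1 hBeq j ((Finset.mem_sort _).2 (hact ▸ hj))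
          · have hj' : j ∉ act A s' i := hact ▸ hj
            rw [act, Finset.mem_filter] at hj hj'
            push_neg at hj hj'
            rw [(hj (Finset.mem_univ j)).1, (hj' (Finset.mem_univ j)).1]
        refine ⟨by rw [e1, e1', ih.1, hBeq], fun i' hi1 hi2 => ?_⟩
        rcases Nat.lt_or_ge ((c : ℕ) - 1 - r) ((i' : ℕ)) with h' | h'
        · exact ih.2 i' (by omega) hi2
        · have : i' = i.castSucc := Fin.ext (by omega)
          rw [this]; exact hcastEq
      · have hstep : bwdBlocks A s c (r + 1) = bwdBlocks A s c r := by
          show bwdBlocks A s c r ++ _ = _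
          rw [dif_neg h, List.append_nil]
        have hstep' : bwdBlocks A s' c (r + 1) = bwdBlocks A s' c r := by
          show bwdBlocks A s' c r ++ _ = _
          rw [dif_neg h, List.append_nil]
        refine ⟨by rw [hstep, hstep', ih.1], fun i' hi1 hi2 => ?_⟩
        exact ih.2 i' (by omega) hi2
  -- conclude
  apply Subtype.ext
  funext i
  rcases Nat.lt_or_ge ((i : ℕ)) ((c : ℕ)) with h | h
  · exact (bwdEq (c : ℕ)).2 i (by omega) (by omega)
  · have := i.isLt
    exact (fwdEq (d - (c : ℕ))).2 i h (by omega)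
end

end PPaux

/-- For `ℓ ≥ d + 1`, the number of legal Pauli paths of Hamming weight between `1` and `ℓ`
is at most `ℓ · n^{⌈ℓ/d⌉} · 18^ℓ`. -/
theorem count_low_weight_legal_paths (n d ℓ : ℕ) (hn : Even n) (hn0 : 0 < n) (hd : 1 ≤ d)
    (hℓ : d + 1 ≤ ℓ) (A : Architecture n d) :
    Nat.card {s : PauliPath n d // IsLegal A s ∧ 1 ≤ pathWeight s ∧ pathWeight s ≤ ℓ}
      ≤ ℓ * n ^ (ℓ ⌈/⌉ d) * 18 ^ ℓ := by
  classical
  set k := ℓ ⌈/⌉ d with hkdef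
  have hk : ∀ s : PauliPath n d, pathWeight s ≤ ℓ →
      (PPaux.supp (s (PPaux.minLayer s))).card ≤ k := by
    intro s hw
    set wc := (PPaux.supp (s (PPaux.minLayer s))).card with hwc
    have hsum : Finset.univ.card • wc ≤ ∑ i : Fin (d + 1), (PPaux.supp (s i)).card :=
      Finset.card_nsmul_le_sum _ _ _ (fun i _ => PPaux.minLayer_spec s i)
    rw [Finset.card_univ, Fintype.card_fin, smul_eq_mul] at hsum
    have hW := PPaux.pathWeight_eq_sum s
    have h1 : (d + 1) * wc ≤ ℓ := by omega
    have h2 : wc * d ≤ ℓ + d - 1 := by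
      calc wc * d ≤ wc * (d + 1) := Nat.mul_le_mul_left _ (by omega)
        _ = (d + 1) * wc := Nat.mul_comm _ _
        _ ≤ ℓ := h1
        _ ≤ ℓ + d - 1 := by omega
    rw [hkdef, Nat.ceilDiv_eq_add_pred_div]
    exact (Nat.le_div_iff_mul_le hd).2 h2
  have hinj := PPaux.code_injective A hn0 ℓ k hℓ hk
  have hle := Nat.card_le_card_of_injective _ hinj
  refine le_trans hle ?_
  have hP : Fintype.card PauliLabel = 4 := rfl
  rw [Nat.card_eq_fintype_card]
  simp only [Fintype.card_prod, Fintype.card_fun, Fintype.card_fin, hP]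
  have h16 : (4 : ℕ) ^ (2 * ℓ) = 16 ^ ℓ := by
    rw [pow_mul]; norm_num
  rw [h16, ← Nat.mul_assoc]
  exact Nat.mul_le_mul_left _ (Nat.pow_le_pow_left (by norm_num) ℓ)
end
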